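/- Let ω be a weakly non-degenerate skew-symmetric bilinear form on E, ω' a skew-symmetric bilinear form on E', and ℓ : E → E' a weak isometry between ω and ω'. Then the kernel of the pullback form ℓ*ω' (i.e., the set of u with ω'(ℓ(u), ℓ(v)) = 0 for all v ∈ E) equals ker ℓ. -/

import Mathlib

/-- The ω-orthogonal of a subspace `K`: `{x | ∀ y ∈ K, ω x y = 0}`. -/
def sympOrth {E : Type*} [AddCommGroup E] [Module ℝ E]
    (ω : E →ₗ[ℝ] E →ₗ[ℝ] ℝ) (K : Submodule ℝ E) : Submodule ℝ E where
  carrier := {x | ∀ y ∈ K, ω x y = 0}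
  add_mem' := by
    intro a b ha hb y hy
    simp [ha y hy, hb y hy]
  zero_mem' := by
    intro y hy
    simp
  smul_mem' := by
    intro c a ha y hy
    simp [ha y hy]

/-- If ℓ is a weak isometry between (E,ω) and (E',ω') with E = ker ℓ ⊕ (ker ℓ)^⊥,
then the kernel of the pullback form ℓ*ω' equals ker ℓ. -/
theorem stmt5 {E E' : Type*}
    [NormedAddCommGroup E] [NormedSpace ℝ E] [CompleteSpace E]
    [NormedAddCommGroup E'] [NormedSpace ℝ E'] [CompleteSpace E']
    (ω : E →ₗ[ℝ] E →ₗ[ℝ] ℝ) (ω' : E' →ₗ[ℝ] E' →ₗ[ℝ] ℝ)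
    (hskew : ∀ u v : E, ω u v = - ω v u)
    (hskew' : ∀ u v : E', ω' u v = - ω' v u)
    (hnd : ∀ u : E, (∀ v : E, ω u v = 0) → u = 0)
    (ℓ : E →L[ℝ] E') (hdense : DenseRange ℓ)
    (hker : LinearMap.ker (ℓ : E →ₗ[ℝ] E') ⊓ sympOrth ω (LinearMap.ker (ℓ : E →ₗ[ℝ] E')) = ⊥)
    (hiso : ∀ u ∈ sympOrth ω (LinearMap.ker (ℓ : E →ₗ[ℝ] E')), ∀ v ∈ sympOrth ω (LinearMap.ker (ℓ : E →ₗ[ℝ] E')),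
      ω' (ℓ u) (ℓ v) = ω u v)
    (hsum : LinearMap.ker (ℓ : E →ₗ[ℝ] E') ⊔ sympOrth ω (LinearMap.ker (ℓ : E →ₗ[ℝ] E')) = ⊤) :
    ∀ u : E, (∀ v : E, ω' (ℓ u) (ℓ v) = 0) ↔ u ∈ LinearMap.ker (ℓ : E →ₗ[ℝ] E') := by
  intro u
  constructor
  · intro h
    -- decompose u = k + w
    have hu : u ∈ LinearMap.ker (ℓ : E →ₗ[ℝ] E') ⊔ sympOrth ω (LinearMap.ker (ℓ : E →ₗ[ℝ] E')) := by
      rw [hsum]; trivial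
    obtain ⟨k, hk, w, hw, hkw⟩ := Submodule.mem_sup.mp hu
    have hℓu : ℓ u = ℓ w := by
      rw [← hkw, map_add, show ℓ k = 0 from LinearMap.mem_ker.mp hk, zero_add]
    -- ω w v = 0 for all v
    have hwz : w = 0 := by
      apply hnd
      intro v
      have hv : v ∈ LinearMap.ker (ℓ : E →ₗ[ℝ] E') ⊔ sympOrth ω (LinearMap.ker (ℓ : E →ₗ[ℝ] E')) := by
        rw [hsum]; trivial
      obtain ⟨k', hk', w', hw', hk'w'⟩ := Submodule.mem_sup.mp hv
      have h1 : ω w k' = 0 := hw k' hk'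
      have h2 : ω w w' = 0 := by
        rw [← hiso w hw w' hw', ← hℓu]; exact h w'
      rw [← hk'w', map_add, h1, h2, add_zero]
    rw [hwz, add_zero] at hkw
    rw [← hkw]; exact hk
  · intro h v
    rw [show ℓ u = 0 from LinearMap.mem_ker.mp h]
    simp
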